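/- Let u ∈ ℤ[X] be locally nilpotent at 1 and suppose u(1) = 2, u(2) = 3, and u(3) = 4. Then u(n) = n + 1 for every integer n ≥ 1; in particular, u(X) = X + 1 whenever u has degree 1 and, for any degree, u^{(n)}(1) ≠ 0 for all n ≥ 1. -/
import Mathlib


open Polynomial

/-- The `n`-th compositional iterate of the polynomial `u`, evaluated at `r`. -/
def iterEval (u : Polynomial ℤ) (n : ℕ) (r : ℤ) : ℤ :=
  (fun x => Polynomial.eval x u)^[n] r

/-- `u` is weakly locally nilpotent at `r` outside `A`: for every prime `p ∉ A`
there is `m ≥ 1` with `p ∣ u^{(m)}(r)`. -/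
def WeaklyLocallyNilpotentAt (u : Polynomial ℤ) (r : ℤ) (A : Set ℕ) : Prop :=
  ∀ p : ℕ, Nat.Prime p → p ∉ A → ∃ m : ℕ, 1 ≤ m ∧ (p : ℤ) ∣ iterEval u m r

/-- `u` is locally nilpotent at `r`: for every prime `p` there is `m ≥ 1`
with `p ∣ u^{(m)}(r)`. -/
def LocallyNilpotentAt (u : Polynomial ℤ) (r : ℤ) : Prop :=
  ∀ p : ℕ, Nat.Prime p → ∃ m : ℕ, 1 ≤ m ∧ (p : ℤ) ∣ iterEval u m r

/-- `u` is nilpotent at `r`: some iterate `u^{(n)}(r)` (with `n ≥ 1`) equals `0`. -/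
def IsNilpotentAt (u : Polynomial ℤ) (r : ℤ) : Prop :=
  ∃ n : ℕ, 1 ≤ n ∧ iterEval u n r = 0

/-- `u` is nilpotent at `r` with nilpotency index exactly `i`. -/
def NilpotentOfIndex (u : Polynomial ℤ) (r : ℤ) (i : ℕ) : Prop :=
  1 ≤ i ∧ iterEval u i r = 0 ∧ ∀ m : ℕ, 1 ≤ m → m < i → iterEval u m r ≠ 0

lemma iterEval_succ (u : Polynomial ℤ) (n : ℕ) (r : ℤ) :
    iterEval u (n + 1) r = u.eval (iterEval u n r) := by
  simp [iterEval, Function.iterate_succ_apply']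

lemma iterEval_zero (u : Polynomial ℤ) (r : ℤ) : iterEval u 0 r = r := rfl

/-- Differences of iterates divide shifted differences. -/
lemma iter_sub_dvd (u : Polynomial ℤ) (s t j : ℕ) :
    (iterEval u s 1 - iterEval u t 1) ∣ (iterEval u (s + j) 1 - iterEval u (t + j) 1) := by
  induction j with
  | zero => simp
  | succ j ih =>
      have h := Polynomial.sub_dvd_eval_sub (iterEval u (s + j) 1) (iterEval u (t + j) 1) u
      have e1 : s + (j + 1) = (s + j) + 1 := by omega
      have e2 : t + (j + 1) = (t + j) + 1 := by omega
      rw [e1, e2, iterEval_succ, iterEval_succ]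
      exact dvd_trans ih h

/-- Descent: a prime dividing `a M - a i` (with `i < M`) divides some `a r` with `r < M`. -/
lemma descent (u : Polynomial ℤ) (hnil : LocallyNilpotentAt u 1)
    (M i : ℕ) (hi : i < M) (q : ℕ) (hq : q.Prime)
    (hd : (q : ℤ) ∣ (iterEval u M 1 - iterEval u i 1)) :
    ∃ r, r < M ∧ (q : ℤ) ∣ iterEval u r 1 := by
  obtain ⟨t, _, htd⟩ := hnil q hq
  have key : ∀ t : ℕ, (q : ℤ) ∣ iterEval u t 1 → ∃ r, r < M ∧ (q : ℤ) ∣ iterEval u r 1 := by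
    intro t
    induction t using Nat.strong_induction_on with
    | _ t IH =>
      intro ht
      by_cases hlt : t < M
      · exact ⟨t, hlt, ht⟩
      · push_neg at hlt
        have hdiff := iter_sub_dvd u M i (t - M)
        have hMt : M + (t - M) = t := by omega
        have h0 : i + (t - M) = t - (M - i) := by omega
        rw [hMt, h0] at hdiff
        have ht' : (q : ℤ) ∣ iterEval u (t - (M - i)) 1 := by
          have h2 := dvd_sub ht (dvd_trans hd hdiff)
          simpa using h2
        exact IH (t - (M - i)) (by omega) ht'
  exact key t htd

/-- The induction step. -/
lemma step (u : Polynomial ℤ) (hnil : LocallyNilpotentAt u 1) (m : ℕ) (hm : 3 ≤ m)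
    (ih : ∀ j, j ≤ m → iterEval u j 1 = (j : ℤ) + 1) :
    iterEval u (m + 1) 1 = (m : ℤ) + 2 := by
  set A := iterEval u (m + 1) 1 with hA
  have hdivs : ∀ j : ℕ, 1 ≤ j → j ≤ m → (j : ℤ) ∣ A - ((m : ℤ) + 2) := by
    intro j hj1 hjm
    have h1 := iter_sub_dvd u m (m - j) 1
    have e1 : iterEval u m 1 - iterEval u (m - j) 1 = (j : ℤ) := by
      rw [ih m le_rfl, ih (m - j) (by omega)]
      have : ((m - j : ℕ) : ℤ) = (m : ℤ) - j := by omega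
      rw [this]; ring
    have e2 : iterEval u ((m - j) + 1) 1 = (m : ℤ) - j + 2 := by
      rw [ih ((m - j) + 1) (by omega)]
      have : (((m - j) + 1 : ℕ) : ℤ) = (m : ℤ) - j + 1 := by omega
      rw [this]; ring
    rw [e1, e2] at h1
    have h2 := dvd_sub h1 (dvd_refl (j : ℤ))
    have e3 : A - ((m : ℤ) - j + 2) - j = A - ((m : ℤ) + 2) := by ring
    rwa [e3] at h2
  -- every prime dividing c = A - (m+1) equals m+1
  have hq_eq : ∀ q : ℕ, q.Prime → (q : ℤ) ∣ A - ((m : ℤ) + 1) → q = m + 1 := by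
    intro q hq hqc
    have hc' : (q : ℤ) ∣ iterEval u (m + 1) 1 - iterEval u m 1 := by
      rw [ih m le_rfl]; exact hqc
    obtain ⟨r, hr, hrd⟩ := descent u hnil (m + 1) m (by omega) q hq hc'
    rw [ih r (by omega)] at hrd
    have hdv : q ∣ (r + 1) := by exact_mod_cast hrd
    have hqle : q ≤ r + 1 := Nat.le_of_dvd (by omega) hdv
    by_contra hne
    have hqm : q ≤ m := by omega
    have hq1 : (q : ℤ) ∣ A - ((m : ℤ) + 2) := hdivs q hq.one_le hqm
    have hone : (q : ℤ) ∣ 1 := by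
      have h2 := dvd_sub hqc hq1
      have e : (A - ((m : ℤ) + 1)) - (A - ((m : ℤ) + 2)) = 1 := by ring
      rwa [e] at h2
    have hle := Int.le_of_dvd one_pos hone
    have h2q : 2 ≤ q := hq.two_le
    omega
  rcases eq_or_ne (A - ((m : ℤ) + 1)).natAbs 1 with habs | habs
  · rcases Int.natAbs_eq_iff.mp habs with hc1 | hc1
    · -- c = 1
      push_cast at hc1; omega
    · -- c = -1 : contradiction with 3 ∣ c - 1 = -2
      have h3 := hdivs 3 (by norm_num) hm
      push_cast at hc1
      omega
  · obtain ⟨p, hp, hpd⟩ := Int.exists_prime_and_dvd habs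
    have hqp : p.natAbs.Prime := Int.prime_iff_natAbs_prime.mp hp
    have hqd : ((p.natAbs : ℤ)) ∣ A - ((m : ℤ) + 1) := (Int.natAbs_dvd).mpr hpd
    have hqm1 : p.natAbs = m + 1 := hq_eq p.natAbs hqp hqd
    have hm1prime : (m + 1).Prime := hqm1 ▸ hqp
    have hpm : ((m : ℤ) + 1) ∣ A - ((m : ℤ) + 1) := by
      have : (((m + 1 : ℕ)) : ℤ) ∣ A - ((m : ℤ) + 1) := hqm1 ▸ hqd
      push_cast at this; exact this
    -- D = A - 1 has no prime divisors
    have hD : ∀ q' : ℕ, q'.Prime → ¬ (q' : ℤ) ∣ A - 1 := by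
      intro q' hq' hq'D
      have hd0 : (q' : ℤ) ∣ iterEval u (m + 1) 1 - iterEval u 0 1 := by
        rw [iterEval_zero]; exact hq'D
      obtain ⟨r, hr, hrd⟩ := descent u hnil (m + 1) 0 (by omega) q' hq' hd0
      rw [ih r (by omega)] at hrd
      have hdv : q' ∣ (r + 1) := by exact_mod_cast hrd
      have hqle : q' ≤ m + 1 := le_trans (Nat.le_of_dvd (by omega) hdv) (by omega)
      rcases eq_or_lt_of_le hqle with heq | hlt
      · -- q' = m+1 : q' ∣ A - 1 and q' ∣ A - (m+1) give q' ∣ m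
        have hq'c : (q' : ℤ) ∣ A - ((m : ℤ) + 1) := by
          have : ((q' : ℕ) : ℤ) = (m : ℤ) + 1 := by rw [heq]; push_cast; ring
          rw [this]; exact hpm
        have hdm : (q' : ℤ) ∣ (m : ℤ) := by
          have h2 := dvd_sub hq'D hq'c
          have e : (A - 1) - (A - ((m : ℤ) + 1)) = (m : ℤ) := by ring
          rwa [e] at h2
        have : (q' : ℤ) ≤ (m : ℤ) := Int.le_of_dvd (by exact_mod_cast by omega) hdm
        omega
      · -- q' ≤ m : then q' ∣ c - 1, so q' ∣ m + 1, so q' = m+1, contradiction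
        have hqm' : q' ≤ m := by omega
        have h1 := hdivs q' hq'.one_le hqm'
        have hdm1 : (q' : ℤ) ∣ ((m : ℤ) + 2) - 1 := by
          have h2 := dvd_sub hq'D h1
          have e : (A - 1) - (A - ((m : ℤ) + 2)) = ((m : ℤ) + 2) - 1 := by ring
          rwa [e] at h2
        have hdnat : q' ∣ m + 1 := by
          have : (q' : ℤ) ∣ ((m + 1 : ℕ) : ℤ) := by push_cast; convert hdm1 using 1; ring
          exact_mod_cast this
        have := (Nat.prime_dvd_prime_iff_eq hq' hm1prime).mp hdnat
        omega
    have hDabs : (A - 1).natAbs = 1 := by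
      by_contra hD1
      obtain ⟨p', hp', hp'd⟩ := Int.exists_prime_and_dvd hD1
      exact hD p'.natAbs (Int.prime_iff_natAbs_prime.mp hp') ((Int.natAbs_dvd).mpr hp'd)
    have hA02 : A = 2 ∨ A = 0 := by
      rcases Int.natAbs_eq_iff.mp hDabs with h' | h' <;> [left; right] <;> omega
    rcases hA02 with h2' | h0'
    · -- A = 2 : m+1 ∣ A - (m+1) = 1 - m, and m+1 ∣ m+1, so m+1 ∣ 2
      have hd2 : ((m : ℤ) + 1) ∣ 2 := by
        have h2 := dvd_add hpm (dvd_refl ((m : ℤ) + 1))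
        have e : A - ((m : ℤ) + 1) + ((m : ℤ) + 1) = A := by ring
        rw [e, h2'] at h2
        exact h2
      have := Int.le_of_dvd (by norm_num) hd2
      omega
    · -- A = 0 : m ∣ A - (m+2) = -(m+2), so m ∣ 2
      have hmd := hdivs m (by omega) le_rfl
      rw [h0'] at hmd
      have hd2 : (m : ℤ) ∣ -2 := by
        have h2 := dvd_add hmd (dvd_refl (m : ℤ))
        have e : 0 - ((m : ℤ) + 2) + (m : ℤ) = -2 := by ring
        rwa [e] at h2
      have hd2' : (m : ℤ) ∣ 2 := (dvd_neg).mp hd2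
      have := Int.le_of_dvd (by norm_num) hd2'
      omega

lemma iter_eq (u : Polynomial ℤ) (h : LocallyNilpotentAt u 1)
    (h1 : u.eval 1 = 2) (h2 : u.eval 2 = 3) (h3 : u.eval 3 = 4) :
    ∀ m : ℕ, iterEval u m 1 = (m : ℤ) + 1 := by
  intro m
  induction m using Nat.strong_induction_on with
  | _ m IH =>
    match m with
    | 0 => simp [iterEval_zero]
    | 1 => rw [iterEval_succ, iterEval_zero, h1]; norm_num
    | 2 =>
        rw [iterEval_succ, IH 1 (by omega)]
        norm_num [h2]
    | 3 =>
        rw [iterEval_succ, IH 2 (by omega)]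
        norm_num [h3]
    | (k + 4) =>
        have hs := step u h (k + 3) (by omega) (fun j hj => IH j (by omega))
        rw [show k + 4 = (k + 3) + 1 from rfl, hs]
        push_cast; ring

theorem locally_nilpotent_at_one_with_initial_values (u : Polynomial ℤ)
    (h : LocallyNilpotentAt u 1)
    (h1 : u.eval 1 = 2) (h2 : u.eval 2 = 3) (h3 : u.eval 3 = 4) :
    (∀ n : ℤ, 1 ≤ n → u.eval n = n + 1) ∧
    (u.natDegree = 1 → u = X + 1) ∧
    (∀ n : ℕ, 1 ≤ n → iterEval u n 1 ≠ 0) := by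
  have hiter := iter_eq u h h1 h2 h3
  have heval : ∀ n : ℤ, 1 ≤ n → u.eval n = n + 1 := by
    intro n hn
    obtain ⟨t, ht⟩ : ∃ t : ℕ, (t : ℤ) + 1 = n := ⟨(n - 1).toNat, by omega⟩
    have hstep : u.eval (iterEval u t 1) = iterEval u (t + 1) 1 := (iterEval_succ u t 1).symm
    rw [hiter t, ht] at hstep
    rw [hstep, hiter (t + 1)]
    push_cast
    omega
  refine ⟨heval, ?_, ?_⟩
  · intro hdeg
    have hu0 : u ≠ 0 := by
      intro h'
      rw [h'] at hdeg
      simp at hdeg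
    have hdle : u.degree ≤ 1 := by
      rw [Polynomial.degree_eq_natDegree hu0, hdeg]
      exact_mod_cast le_refl _
    have heq := Polynomial.eq_X_add_C_of_degree_le_one hdle
    rw [heq] at h1 h2
    simp at h1 h2
    have ha : u.coeff 1 = 1 := by linarith
    have hb : u.coeff 0 = 1 := by linarith
    rw [heq, ha, hb]
    simp
  · intro n hn
    rw [hiter n]
    omega
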